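/- For integers N ≥ 2, k ≥ 2, and spin configurations σ^1, ..., σ^k ∈ {-1,1}^N, the following identity holds: ∑_{1≤i<j≤N} (σ^1_i σ^1_j + ⋯ + σ^k_i σ^k_j)^2 = kN²/2 − Nk²/2 + ∑_{1≤u<v≤k} (σ^u_1 σ^v_1 + ⋯ + σ^u_N σ^v_N)^2. -/

import Mathlib

open Finset

lemma offdiag_helper {n : ℕ} (g : Fin n → Fin n → ℝ) (hs : ∀ i j, g i j = g j i) :
    ∑ i : Fin n, ∑ j : Fin n, g i j =
      2 * (∑ i : Fin n, ∑ j ∈ Finset.Ioi i, g i j) + ∑ i : Fin n, g i i := by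
  have swap : ∑ i : Fin n, ∑ j ∈ Finset.Iio i, g i j
      = ∑ i : Fin n, ∑ j ∈ Finset.Ioi i, g i j := by
    rw [Finset.sum_sigma', Finset.sum_sigma']
    refine Finset.sum_nbij' (fun p => ⟨p.2, p.1⟩) (fun p => ⟨p.2, p.1⟩) ?_ ?_ ?_ ?_ ?_
    · simp
    · simp
    · simp
    · simp
    · intro p hp
      exact hs p.1 p.2
  have split : ∀ i : Fin n, ∑ j : Fin n, g i j
      = g i i + ((∑ j ∈ Finset.Ioi i, g i j) + ∑ j ∈ Finset.Iio i, g i j) := by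
    intro i
    have huniv : (Finset.univ : Finset (Fin n)) = Finset.Iio i ∪ Finset.Ici i := by
      ext j; simp [lt_or_ge]
    have hdisj : Disjoint (Finset.Iio i) (Finset.Ici i) := by
      rw [Finset.disjoint_left]
      intro a ha hb
      simp only [Finset.mem_Iio, Finset.mem_Ici] at ha hb
      exact absurd (lt_of_lt_of_le ha hb) (lt_irrefl a)
    rw [huniv, Finset.sum_union hdisj, Finset.Ici_eq_cons_Ioi, Finset.sum_cons]
    ring
  simp_rw [split]
  rw [Finset.sum_add_distrib, Finset.sum_add_distrib, swap]
  ring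

theorem stmt0 (N k : ℕ) (hN : 2 ≤ N) (hk : 2 ≤ k)
    (σ : Fin k → Fin N → ℝ) (hσ : ∀ u i, σ u i = 1 ∨ σ u i = -1) :
    ∑ i : Fin N, ∑ j ∈ Finset.Ioi i, (∑ u : Fin k, σ u i * σ u j) ^ 2 =
      (k : ℝ) * (N : ℝ) ^ 2 / 2 - (N : ℝ) * (k : ℝ) ^ 2 / 2 +
        ∑ u : Fin k, ∑ v ∈ Finset.Ioi u, (∑ i : Fin N, σ u i * σ v i) ^ 2 := by
  have hsq : ∀ u i, σ u i * σ u i = 1 := by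
    intro u i; rcases hσ u i with h | h <;> rw [h] <;> norm_num
  -- full sums agree
  have hA : ∑ i : Fin N, ∑ j : Fin N, (∑ u : Fin k, σ u i * σ u j) ^ 2 =
      ∑ u : Fin k, ∑ v : Fin k, (∑ i : Fin N, σ u i * σ v i) ^ 2 := by
    have expand : ∀ (i j : Fin N), (∑ u : Fin k, σ u i * σ u j) ^ 2 =
        ∑ u : Fin k, ∑ v : Fin k, (σ u i * σ v i) * (σ u j * σ v j) := by
      intro i j
      rw [sq, Finset.sum_mul_sum]
      exact Finset.sum_congr rfl fun u _ => Finset.sum_congr rfl fun v _ => by ring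
    have expand2 : ∀ (u v : Fin k), (∑ i : Fin N, σ u i * σ v i) ^ 2 =
        ∑ i : Fin N, ∑ j : Fin N, (σ u i * σ v i) * (σ u j * σ v j) := by
      intro u v
      rw [sq, Finset.sum_mul_sum]
    simp_rw [expand, expand2]
    calc ∑ i : Fin N, ∑ j : Fin N, ∑ u : Fin k, ∑ v : Fin k,
          (σ u i * σ v i) * (σ u j * σ v j)
        = ∑ i : Fin N, ∑ u : Fin k, ∑ j : Fin N, ∑ v : Fin k,
          (σ u i * σ v i) * (σ u j * σ v j) :=
          Finset.sum_congr rfl fun i _ => Finset.sum_comm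
      _ = ∑ u : Fin k, ∑ i : Fin N, ∑ j : Fin N, ∑ v : Fin k,
          (σ u i * σ v i) * (σ u j * σ v j) := Finset.sum_comm
      _ = ∑ u : Fin k, ∑ i : Fin N, ∑ v : Fin k, ∑ j : Fin N,
          (σ u i * σ v i) * (σ u j * σ v j) :=
          Finset.sum_congr rfl fun u _ => Finset.sum_congr rfl fun i _ =>
            Finset.sum_comm
      _ = ∑ u : Fin k, ∑ v : Fin k, ∑ i : Fin N, ∑ j : Fin N,
          (σ u i * σ v i) * (σ u j * σ v j) :=
          Finset.sum_congr rfl fun u _ => Finset.sum_comm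
  have d1 : ∑ i : Fin N, (∑ u : Fin k, σ u i * σ u i) ^ 2 = (N : ℝ) * (k : ℝ) ^ 2 := by
    simp [hsq, sq]
  have d2 : ∑ u : Fin k, (∑ i : Fin N, σ u i * σ u i) ^ 2 = (k : ℝ) * (N : ℝ) ^ 2 := by
    simp [hsq, sq]
  have e1 := offdiag_helper (fun i j => (∑ u : Fin k, σ u i * σ u j) ^ 2)
    (fun i j => by simp_rw [mul_comm (σ _ i) (σ _ j)])
  have e2 := offdiag_helper (fun u v => (∑ i : Fin N, σ u i * σ v i) ^ 2)
    (fun u v => by simp_rw [mul_comm (σ u _) (σ v _)])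
  rw [e1, e2, d1, d2] at hA
  linarith
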